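/- arXiv:2202.02402 — 4 statements merged into one kernel-verified Lean document; each statement's English description precedes it below -/
import Mathlib

section
/- A 2×2 complex matrix of the form [[w, λ],[0, w]] is a contraction (operator norm at most 1) if and only if |λ| ≤ 1 - |w|². -/
private lemma aux_suff (r L a b : ℝ) (hr : 0 ≤ r) (hL : 0 ≤ L) (ha : 0 ≤ a) (hb : 0 ≤ b)
    (h : L ≤ 1 - r ^ 2) :
    (r * a + L * b) ^ 2 + (r * b) ^ 2 ≤ a ^ 2 + b ^ 2 := by
  nlinarith [sq_nonneg (a - r * b), mul_nonneg hL (sq_nonneg (a - r * b)),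
    mul_nonneg (sub_nonneg.2 h) (add_nonneg (sq_nonneg a) (sq_nonneg b)),
    mul_nonneg (mul_nonneg hL (sub_nonneg.2 h)) (sq_nonneg b)]

/-- A 2×2 complex matrix of the form [[w, λ],[0, w]] is a contraction (operator norm at
most 1, acting on ℂ² with the Euclidean norm) if and only if |λ| ≤ 1 - |w|². -/
theorem stmt_0 (w l : ℂ) :
    ‖(Matrix.toEuclideanCLM (𝕜 := ℂ) (n := Fin 2)) !![w, l; 0, w]‖ ≤ 1 ↔
      ‖l‖ ≤ 1 - ‖w‖ ^ 2 := by
  set T := (Matrix.toEuclideanCLM (𝕜 := ℂ) (n := Fin 2)) !![w, l; 0, w] with hT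
  have happ : ∀ v : Fin 2 → ℂ,
      T ((WithLp.equiv 2 (Fin 2 → ℂ)).symm v)
        = (WithLp.equiv 2 (Fin 2 → ℂ)).symm ![w * v 0 + l * v 1, w * v 1] := by
    intro v
    rw [hT, WithLp.equiv_symm_apply, Matrix.toEuclideanCLM_toLp]
    congr 1
    simp [Matrix.mulVec, dotProduct, Fin.sum_univ_two]
  have hnorm : ∀ v : Fin 2 → ℂ,
      ‖(WithLp.equiv 2 (Fin 2 → ℂ)).symm v‖ ^ 2
        = ‖v 0‖ ^ 2 + ‖v 1‖ ^ 2 := by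
    intro v
    rw [EuclideanSpace.norm_eq, Real.sq_sqrt (by positivity)]
    simp [Fin.sum_univ_two]
  -- reduce the operator-norm condition to a pointwise inequality on squares
  have hiff : ‖T‖ ≤ 1 ↔ ∀ x y : ℂ,
      ‖w * x + l * y‖ ^ 2 + ‖w * y‖ ^ 2
        ≤ ‖x‖ ^ 2 + ‖y‖ ^ 2 := by
    constructor
    · intro h x y
      have h0 := T.le_opNorm ((WithLp.equiv 2 (Fin 2 → ℂ)).symm ![x, y])
      have hle : ‖T ((WithLp.equiv 2 (Fin 2 → ℂ)).symm ![x, y])‖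
          ≤ ‖(WithLp.equiv 2 (Fin 2 → ℂ)).symm ![x, y]‖ := by
        calc ‖T ((WithLp.equiv 2 (Fin 2 → ℂ)).symm ![x, y])‖
            ≤ ‖T‖ * ‖(WithLp.equiv 2 (Fin 2 → ℂ)).symm ![x, y]‖ := h0
          _ ≤ 1 * ‖(WithLp.equiv 2 (Fin 2 → ℂ)).symm ![x, y]‖ :=
              mul_le_mul_of_nonneg_right h (norm_nonneg _)
          _ = _ := one_mul _
      have hsq := mul_self_le_mul_self (norm_nonneg _) hle
      rw [← pow_two, ← pow_two, happ, hnorm, hnorm] at hsq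
      simpa using hsq
    · intro h
      refine T.opNorm_le_bound zero_le_one ?_
      intro x
      rw [one_mul]
      obtain ⟨v, rfl⟩ := (WithLp.equiv 2 (Fin 2 → ℂ)).symm.surjective x
      have key := h (v 0) (v 1)
      have h1 : ‖T ((WithLp.equiv 2 (Fin 2 → ℂ)).symm v)‖ ^ 2
          ≤ ‖(WithLp.equiv 2 (Fin 2 → ℂ)).symm v‖ ^ 2 := by
        rw [happ, hnorm, hnorm]; simpa using key
      nlinarith [h1, norm_nonneg (T ((WithLp.equiv 2 (Fin 2 → ℂ)).symm v)),
        norm_nonneg ((WithLp.equiv 2 (Fin 2 → ℂ)).symm v)]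
  rw [hiff]
  set r := ‖w‖ with hr
  set L := ‖l‖ with hL
  have hr0 : 0 ≤ r := norm_nonneg w
  have hL0 : 0 ≤ L := norm_nonneg l
  constructor
  · intro h
    have hr1 : r ^ 2 ≤ 1 := by
      have h10 := h 1 0
      simp [map_mul] at h10
      nlinarith [h10]
    by_cases hl : l = 0
    · have : L = 0 := by rw [hL, hl]; simp
      nlinarith
    by_cases hw : w = 0
    · have hr00 : r = 0 := by rw [hr, hw]; simp
      have h01 := h 0 1
      simp [hw] at h01
      rw [hr00]
      nlinarith [h01, hL0]
    have hrpos : 0 < r := norm_pos_iff.mpr hw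
    have hLpos : 0 < L := norm_pos_iff.mpr hl
    -- key: for all a ≥ 0, (a r + L)^2 + r^2 ≤ a^2 + 1
    have hkey : ∀ a : ℝ, 0 ≤ a → (a * r + L) ^ 2 + r ^ 2 ≤ a ^ 2 + 1 := by
      intro a ha
      set x₀ : ℂ := ((a / (r * L) : ℝ) : ℂ) * ((starRingEnd ℂ) w * l) with hx₀
      have hww : w * (starRingEnd ℂ) w = ((r : ℂ)) ^ 2 := by
        rw [Complex.mul_conj]
        norm_cast
        rw [hr, Complex.sq_norm]
      have hrC : (r : ℂ) ≠ 0 := by exact_mod_cast hrpos.ne'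
      have hLC : (L : ℂ) ≠ 0 := by exact_mod_cast hLpos.ne'
      have e1 : w * x₀ + l * 1 = ((a * r / L + 1 : ℝ) : ℂ) * l := by
        rw [hx₀]
        push_cast
        field_simp
        linear_combination (a:ℂ) * hww
      have habs1 : ‖w * x₀ + l * 1‖ = a * r + L := by
        rw [e1, norm_mul, Complex.norm_real, Real.norm_eq_abs, ← hL,
          abs_of_nonneg (by positivity : (0:ℝ) ≤ a * r / L + 1)]
        field_simp
      have habs2 : ‖x₀‖ = a := by
        rw [hx₀, norm_mul, norm_mul, Complex.norm_real, Real.norm_eq_abs, Complex.norm_conj, ← hr, ← hL,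
          abs_of_nonneg (by positivity : (0:ℝ) ≤ a / (r * L))]
        field_simp
      have hfin := h x₀ 1
      rw [habs1, habs2] at hfin
      simpa [map_mul, ← hr] using hfin
    -- now optimize: choose a = r L / (1 - r^2) when possible
    rcases eq_or_lt_of_le (by nlinarith : (0:ℝ) ≤ 1 - r ^ 2) with hs | hs
    · have := hkey 1 zero_le_one
      nlinarith
    · have hs0 : (1 - r ^ 2) ≠ 0 := ne_of_gt hs
      have h2 := hkey (r * L / (1 - r ^ 2)) (by positivity)
      have e3 : r * L / (1 - r ^ 2) * r + L = L / (1 - r ^ 2) := by field_simp; ring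
      rw [e3] at h2
      have e4 : (L / (1 - r ^ 2)) ^ 2 * (1 - r ^ 2) ^ 2 = L ^ 2 := by field_simp
      have e5 : (r * L / (1 - r ^ 2)) ^ 2 * (1 - r ^ 2) ^ 2 = r ^ 2 * L ^ 2 := by
        field_simp
      have h6 := mul_le_mul_of_nonneg_right h2 (sq_nonneg (1 - r ^ 2))
      have h7 : L ^ 2 ≤ (1 - r ^ 2) ^ 2 := by nlinarith [h6, e4, e5, hs]
      nlinarith [h7, hL0, hs]
  · intro h x y
    have h1 : ‖w * x + l * y‖ ≤ r * ‖x‖ + L * ‖y‖ := by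
      calc ‖w * x + l * y‖ ≤ ‖w * x‖ + ‖l * y‖ :=
            norm_add_le _ _
        _ = r * ‖x‖ + L * ‖y‖ := by rw [norm_mul, norm_mul]
    have h2 : ‖w * x + l * y‖ ^ 2
        ≤ (r * ‖x‖ + L * ‖y‖) ^ 2 :=
      pow_le_pow_left₀ (norm_nonneg _) h1 2
    have h3 := aux_suff r L (‖x‖) (‖y‖) hr0 hL0
      (norm_nonneg x) (norm_nonneg y) h
    rw [norm_mul]
    nlinarith [h2, h3]
end

section
/- For G₀(z,w) = 8 + 8 z w̄ − (z w̄)², the identity G₀(z,w)·∂∂̄G₀(z,w) − ∂G₀(z,w)·∂̄G₀(z,w) = 64 − 32 z w̄ − 8 (z w̄)² holds for all z, w ∈ ℂ, and this function is not a non-negative definite kernel on the unit disc. -/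
open scoped ComplexOrder

local notation "conj'" => (starRingEnd ℂ)

/-- `K` is a non-negative definite kernel on the set `s`. -/
def IsNNDOn (s : Set ℂ) (K : ℂ → ℂ → ℂ) : Prop :=
  ∀ (p : ℕ) (x : Fin p → ℂ), (∀ i, x i ∈ s) →
    Matrix.PosSemidef (Matrix.of fun i j : Fin p => K (x i) (x j))

/-- `K` is sesqui-analytic on `s`: holomorphic in the first variable and
anti-holomorphic in the second. -/
def Sesq (s : Set ℂ) (K : ℂ → ℂ → ℂ) : Prop :=
  (∀ w ∈ s, AnalyticOnNhd ℂ (fun z => K z w) s) ∧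
    (∀ z ∈ s, AnalyticOnNhd ℂ (fun w => conj' (K z w)) s)

/-- `∂`, the derivative in the first (holomorphic) variable. -/
noncomputable def D (K : ℂ → ℂ → ℂ) (z w : ℂ) : ℂ := deriv (fun u => K u w) z

/-- `∂̄`, the derivative in the conjugate of the second (anti-holomorphic) variable. -/
noncomputable def Db (K : ℂ → ℂ → ℂ) (z w : ℂ) : ℂ :=
  conj' (deriv (fun u => conj' (K z u)) w)

lemma myDeriv (c z : ℂ) :
    deriv (fun u : ℂ => 8 + 8 * (u * c) - (u * c) ^ 2) z = 8 * c - 2 * z * c ^ 2 := by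
  have h1 : HasDerivAt (fun u : ℂ => u * c) c z := by
    simpa using (hasDerivAt_id z).mul_const c
  have h : HasDerivAt (fun u : ℂ => 8 + 8 * (u * c) - (u * c) ^ 2)
      (0 + 8 * c - 2 * (z * c) ^ 1 * c) z :=
    ((hasDerivAt_const z (8 : ℂ)).add (h1.const_mul 8)).sub (h1.pow 2)
  rw [h.deriv]; ring

lemma myDeriv2 (c z : ℂ) :
    deriv (fun u : ℂ => 8 * u - c * u ^ 2) z = 8 - 2 * c * z := by
  have h : HasDerivAt (fun u : ℂ => 8 * u - c * u ^ 2) (8 * 1 - c * (2 * z ^ 1 * 1)) z :=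
    ((hasDerivAt_id z).const_mul 8).sub (((hasDerivAt_id z).pow 2).const_mul c)
  rw [h.deriv]; ring

/-- For `G₀(z,w) = 8 + 8 z w̄ − (z w̄)²` one has
`G₀ ∂∂̄G₀ − ∂G₀ ∂̄G₀ = 64 − 32 z w̄ − 8 (z w̄)²` for all `z, w ∈ ℂ`, and this
function is not a non-negative definite kernel on the unit disc. -/
theorem stmt_8 (G₀ : ℂ → ℂ → ℂ)
    (hG₀ : ∀ z w : ℂ, G₀ z w = 8 + 8 * (z * conj' w) - (z * conj' w) ^ 2) :
    (∀ z w : ℂ,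
        G₀ z w * D (Db G₀) z w - D G₀ z w * Db G₀ z w =
          64 - 32 * (z * conj' w) - 8 * (z * conj' w) ^ 2) ∧
      ¬ IsNNDOn (Metric.ball (0 : ℂ) 1)
        (fun z w => 64 - 32 * (z * conj' w) - 8 * (z * conj' w) ^ 2) := by
  have hDb : ∀ z w : ℂ, Db G₀ z w = 8 * z - 2 * conj' w * z ^ 2 := by
    intro z w
    have : (fun u : ℂ => conj' (G₀ z u)) =
        fun u : ℂ => 8 + 8 * (u * conj' z) - (u * conj' z) ^ 2 := by
      funext u
      simp only [hG₀, map_sub, map_add, map_mul, map_pow, map_ofNat,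
        RingHom.id_apply, Complex.conj_conj]
      ring
    rw [Db, this, myDeriv]
    simp only [map_sub, map_mul, map_pow, map_ofNat, Complex.conj_conj]
  have hD : ∀ z w : ℂ, D G₀ z w = 8 * conj' w - 2 * z * (conj' w) ^ 2 := by
    intro z w
    have : (fun u : ℂ => G₀ u w) =
        fun u : ℂ => 8 + 8 * (u * conj' w) - (u * conj' w) ^ 2 := by
      funext u; exact hG₀ u w
    rw [D, this, myDeriv]
  have hDDb : ∀ z w : ℂ, D (Db G₀) z w = 8 - 4 * conj' w * z := by
    intro z w
    have : (fun u : ℂ => Db G₀ u w) = fun u : ℂ => 8 * u - (2 * conj' w) * u ^ 2 := by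
      funext u; rw [hDb]
    rw [D, this, myDeriv2]; ring
  constructor
  · intro z w
    rw [hG₀, hD, hDb, hDDb]; ring
  · intro h
    have hmem : ∀ i, (![0, 1/2] : Fin 2 → ℂ) i ∈ Metric.ball (0 : ℂ) 1 := by
      intro i
      set_option linter.unnecessarySeqFocus false in
      fin_cases i <;> simp [Metric.mem_ball] <;> norm_num
    have hv := (h 2 ![0, 1/2] hmem).dotProduct_mulVec_nonneg ![1, -1]
    simp only [Matrix.mulVec, dotProduct, Fin.sum_univ_two, Matrix.of_apply,
      Matrix.cons_val_zero, Matrix.cons_val_one, Matrix.head_cons, Pi.star_apply,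
      star_one, star_neg] at hv
    norm_num [Complex.le_def, Complex.ext_iff, map_ofNat] at hv
end

section
/- For the Hardy space of the bidisc with kernel (1−z₁w̄₁)⁻¹(1−z₂w̄₂)⁻¹, let S₀ be the closed span of the vectors e_k(z₁,z₂) = Σ_{j=0}^{k} z₁ʲ z₂^{k−j}, each with ‖e_k‖² = k+1. Then the reproducing kernel of S₀ satisfies, on the diagonal, K_{S₀}(z,z) = (1/|z₁−z₂|²)·log( |1−z₁z̄₂|² / ((1−|z₁|²)(1−|z₂|²)) ) for z = (z₁,z₂) ∈ 𝔻² with z₁ ≠ z₂; equivalently Σ_{k≥0} |e_k(z)|²/(k+1) equals this expression. -/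
local notation "conj'" => (starRingEnd ℂ)

/-- For the Hardy space of the bidisc, the reproducing kernel of the span `S₀` of the
vectors `e_k(z₁,z₂) = Σ_{j=0}^{k} z₁ʲ z₂^{k−j}` (with `‖e_k‖² = k+1`) satisfies, on the
diagonal, `Σ_{k≥0} |e_k(z)|²/(k+1) = (1/|z₁−z₂|²) log(|1−z₁z̄₂|²/((1−|z₁|²)(1−|z₂|²)))`
for `z₁ ≠ z₂` in the disc. -/
theorem stmt_17 (z₁ z₂ : ℂ) (h₁ : z₁ ∈ Metric.ball (0 : ℂ) 1)
    (h₂ : z₂ ∈ Metric.ball (0 : ℂ) 1) (hne : z₁ ≠ z₂) :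
    ∑' k : ℕ,
        ‖∑ j ∈ Finset.range (k + 1), z₁ ^ j * z₂ ^ (k - j)‖ ^ 2 / (k + 1)
      = (1 / ‖z₁ - z₂‖ ^ 2) *
          Real.log (‖1 - z₁ * conj' z₂‖ ^ 2 /
            ((1 - ‖z₁‖ ^ 2) * (1 - ‖z₂‖ ^ 2))) := by
  set a : ℝ := ‖z₁‖ with ha_def
  set b : ℝ := ‖z₂‖ with hb_def
  have ha : a < 1 := by simpa [ha_def] using h₁
  have hb : b < 1 := by simpa [hb_def] using h₂
  have ha0 : 0 ≤ a := norm_nonneg _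
  have hb0 : 0 ≤ b := norm_nonneg _
  have ha2 : a ^ 2 < 1 := by nlinarith
  have hb2 : b ^ 2 < 1 := by nlinarith
  set w : ℂ := z₁ * conj' z₂ with hw_def
  have hwabs : ‖w‖ = a * b := by
    simp [hw_def, map_mul, ha_def, hb_def]
  have hwlt : ‖w‖ < 1 := by rw [hwabs]; nlinarith
  have hw1 : (1 : ℂ) - w ≠ 0 := by
    intro h
    have : ‖w‖ = 1 := by
      have : (1 : ℂ) = w := by linear_combination h
      rw [← this]; simp
    linarith
  set d : ℝ := ‖z₁ - z₂‖ ^ 2 with hd_def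
  have hd0 : 0 < d := by
    rw [hd_def]
    exact pow_pos (norm_pos_iff.mpr (sub_ne_zero.mpr hne)) 2
  -- series facts
  have hA : HasSum (fun k : ℕ => (a ^ 2) ^ (k + 1) / (k + 1)) (-Real.log (1 - a ^ 2)) := by
    exact Real.hasSum_pow_div_log_of_abs_lt_one (by rw [abs_of_nonneg (by positivity)]; exact ha2)
  have hB : HasSum (fun k : ℕ => (b ^ 2) ^ (k + 1) / (k + 1)) (-Real.log (1 - b ^ 2)) := by
    exact Real.hasSum_pow_div_log_of_abs_lt_one (by rw [abs_of_nonneg (by positivity)]; exact hb2)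
  have hWc : HasSum (fun k : ℕ => w ^ (k + 1) / ((k : ℂ) + 1)) (-Complex.log (1 - w)) := by
    have h0 := Complex.hasSum_taylorSeries_neg_log (z := w) (by simpa using hwlt)
    have h1 := (hasSum_nat_add_iff' (f := fun n : ℕ => w ^ n / (n : ℂ)) 1).mpr h0
    simpa using h1
  have hW : HasSum (fun k : ℕ => (w ^ (k + 1)).re / (k + 1))
      (-Real.log (‖1 - w‖)) := by
    have := Complex.hasSum_re hWc
    have hre : (-Complex.log (1 - w)).re = -Real.log (‖1 - w‖) := by
      simp [Complex.log_re]
    rw [hre] at this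
    convert this using 2 with k
    have : ((k : ℂ) + 1) = ((k + 1 : ℝ) : ℂ) := by push_cast; ring
    rw [this, Complex.div_ofReal_re]
  -- combine
  have hS : HasSum
      (fun k : ℕ => ((a ^ 2) ^ (k + 1) / (k + 1) + (b ^ 2) ^ (k + 1) / (k + 1)
        - 2 * ((w ^ (k + 1)).re / (k + 1))) / d)
      ((-Real.log (1 - a ^ 2) + -Real.log (1 - b ^ 2)
        - 2 * (-Real.log (‖1 - w‖))) / d) :=
    ((hA.add hB).sub (hW.mul_left 2)).div_const d
  -- termwise equality
  have hterm : ∀ k : ℕ,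
      ‖∑ j ∈ Finset.range (k + 1), z₁ ^ j * z₂ ^ (k - j)‖ ^ 2 / (k + 1)
        = ((a ^ 2) ^ (k + 1) / (k + 1) + (b ^ 2) ^ (k + 1) / (k + 1)
          - 2 * ((w ^ (k + 1)).re / (k + 1))) / d := by
    intro k
    have hgeom : (∑ j ∈ Finset.range (k + 1), z₁ ^ j * z₂ ^ (k - j)) * (z₁ - z₂)
        = z₁ ^ (k + 1) - z₂ ^ (k + 1) := by
      have := geom_sum₂_mul z₁ z₂ (k + 1)
      simpa using this
    have habs : ‖∑ j ∈ Finset.range (k + 1), z₁ ^ j * z₂ ^ (k - j)‖ ^ 2 * d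
        = ‖z₁ ^ (k + 1) - z₂ ^ (k + 1)‖ ^ 2 := by
      rw [hd_def, ← mul_pow, ← norm_mul, hgeom]
    have hnsq : ‖z₁ ^ (k + 1) - z₂ ^ (k + 1)‖ ^ 2
        = (a ^ 2) ^ (k + 1) + (b ^ 2) ^ (k + 1) - 2 * (w ^ (k + 1)).re := by
      rw [Complex.sq_norm, Complex.normSq_sub]
      have e1 : Complex.normSq (z₁ ^ (k + 1)) = (a ^ 2) ^ (k + 1) := by
        rw [← Complex.sq_norm, norm_pow, ← ha_def, ← pow_mul, ← pow_mul, mul_comm]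
      have e2 : Complex.normSq (z₂ ^ (k + 1)) = (b ^ 2) ^ (k + 1) := by
        rw [← Complex.sq_norm, norm_pow, ← hb_def, ← pow_mul, ← pow_mul, mul_comm]
      have e3 : z₁ ^ (k + 1) * conj' (z₂ ^ (k + 1)) = w ^ (k + 1) := by
        rw [hw_def, mul_pow, map_pow]
      rw [e1, e2, e3]
    have hk1 : (0 : ℝ) < (k : ℝ) + 1 := by positivity
    field_simp
    rw [habs, hnsq]

  rw [tsum_congr hterm, hS.tsum_eq]
  -- final log identity
  have h1a : (0 : ℝ) < 1 - a ^ 2 := by linarith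
  have h1b : (0 : ℝ) < 1 - b ^ 2 := by linarith
  have hw0 : (0 : ℝ) < ‖1 - w‖ := by
    simpa [norm_pos_iff] using hw1
  rw [Real.log_div (by positivity) (by positivity), Real.log_mul (by positivity) (by positivity),
    Real.log_pow]
  rw [div_eq_iff (ne_of_gt hd0)]
  push_cast
  field_simp
  ring
end

section
/- Let z₁ ∈ 𝔻 be fixed and let K_{A₀}(z,z) = (1−|z₁|²)⁻¹(1−|z₂|²)⁻¹ − |z₁−z₂|⁻² log( |1−z₁z̄₂|² / ((1−|z₁|²)(1−|z₂|²)) ) for z₂ ≠ z₁. Then lim_{z₂ → z₁} K_{A₀}(z,z)/|z₁−z₂|² = (1/2)·(1−|z₁|²)⁻⁴. -/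
open Filter

local notation "conj'" => (starRingEnd ℂ)

lemma logTaylorHalf : Tendsto (fun t : ℝ => (t - Real.log (1+t)) / t^2)
    (nhdsWithin 0 {(0:ℝ)}ᶜ) (nhds (1/2)) := by
  have hb : ∀ t : ℝ, |t| < 1 → t ≠ 0 →
      |(t - Real.log (1+t)) / t^2 - 1/2| ≤ |t| / (1 - |t|) := by
    intro t ht hne
    have h' : |(-t : ℝ)| < 1 := by rwa [abs_neg]
    have key := Real.abs_log_sub_add_sum_range_le h' 2
    rw [abs_neg] at key
    have hsum : (∑ i ∈ Finset.range 2, (-t) ^ (i + 1) / (i + 1)) = -t + t^2/2 := by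
      simp [Finset.sum_range_succ]; ring
    have h1t : (1 : ℝ) - -t = 1 + t := by ring
    rw [hsum, h1t] at key
    have ht2 : (0:ℝ) < t^2 := by positivity
    have heq : (t - Real.log (1+t)) / t^2 - 1/2 = -((-t + t^2/2) + Real.log (1+t)) / t^2 := by
      field_simp; ring
    rw [heq, abs_div, abs_neg, abs_of_pos ht2]
    have h3 : |t|^3 = |t| * t^2 := by rw [← sq_abs]; ring
    calc |(-t + t^2/2) + Real.log (1+t)| / t^2 ≤ (|t|^3 / (1-|t|)) / t^2 :=
          by gcongr
      _ = |t| / (1 - |t|) := by rw [h3, div_div, mul_comm (1-|t|) (t^2), ← div_div,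
            mul_div_assoc, div_self ht2.ne', mul_one]
  have hg : Tendsto (fun t : ℝ => |t| / (1 - |t|)) (nhdsWithin 0 {(0:ℝ)}ᶜ) (nhds 0) := by
    have : ContinuousAt (fun t : ℝ => |t| / (1 - |t|)) 0 := by
      apply ContinuousAt.div
      · exact continuous_abs.continuousAt
      · exact (continuous_const.sub continuous_abs).continuousAt
      · norm_num
    have h0 : Tendsto (fun t : ℝ => |t| / (1 - |t|)) (nhdsWithin 0 {(0:ℝ)}ᶜ)
        (nhds (|(0:ℝ)| / (1 - |(0:ℝ)|))) := this.continuousWithinAt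
    norm_num at h0
    exact h0
  have hev : ∀ᶠ t in nhdsWithin (0:ℝ) {(0:ℝ)}ᶜ,
      ‖(t - Real.log (1+t)) / t^2 - 1/2‖ ≤ |t| / (1 - |t|) := by
    filter_upwards [self_mem_nhdsWithin,
      nhdsWithin_le_nhds (eventually_abs_sub_lt (0:ℝ) one_pos)] with t h1 h2
    simp only [sub_zero] at h2
    exact hb t h2 h1
  have := squeeze_zero_norm' hev hg
  have h2 : Tendsto (fun t : ℝ => ((t - Real.log (1+t)) / t^2 - 1/2) + 1/2)
      (nhdsWithin 0 {(0:ℝ)}ᶜ) (nhds (0 + 1/2)) := this.add tendsto_const_nhds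
  simpa using h2
open Filter



lemma kernel_identity (z₁ z₂ : ℂ) : ‖1 - z₁ * conj' z₂‖ ^ 2 =
    (1 - ‖z₁‖ ^ 2) * (1 - ‖z₂‖ ^ 2) + ‖z₁ - z₂‖ ^ 2 := by
  simp only [Complex.sq_norm, Complex.normSq_apply, Complex.sub_re, Complex.sub_im,
    Complex.mul_re, Complex.mul_im, Complex.conj_re, Complex.conj_im, Complex.one_re,
    Complex.one_im]
  ring


/-- For fixed `z₁ ∈ 𝔻` and
`K_{A₀}(z,z) = (1−|z₁|²)⁻¹(1−|z₂|²)⁻¹ − |z₁−z₂|⁻² log(|1−z₁z̄₂|²/((1−|z₁|²)(1−|z₂|²)))`,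
one has `lim_{z₂ → z₁} K_{A₀}(z,z)/|z₁−z₂|² = (1/2)(1−|z₁|²)⁻⁴`. -/
theorem stmt_18 (z₁ : ℂ) (h₁ : z₁ ∈ Metric.ball (0 : ℂ) 1) :
    Tendsto
      (fun z₂ : ℂ =>
        ((1 - ‖z₁‖ ^ 2)⁻¹ * (1 - ‖z₂‖ ^ 2)⁻¹ -
            (‖z₁ - z₂‖ ^ 2)⁻¹ *
              Real.log (‖1 - z₁ * conj' z₂‖ ^ 2 /
                ((1 - ‖z₁‖ ^ 2) * (1 - ‖z₂‖ ^ 2)))) /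
          ‖z₁ - z₂‖ ^ 2)
      (nhdsWithin z₁ (Metric.ball (0 : ℂ) 1 \ {z₁}))
      (nhds ((1 / 2) * ((1 - ‖z₁‖ ^ 2)⁻¹) ^ 4)) := by
  have ha : ‖z₁‖ < 1 := by simpa using h₁
  set A : ℝ := 1 - ‖z₁‖ ^ 2 with hAdef
  have hA : 0 < A := by
    have : ‖z₁‖ ^ 2 < 1 := by
      nlinarith [norm_nonneg z₁]
    linarith
  set L := nhdsWithin z₁ (Metric.ball (0 : ℂ) 1 \ {z₁}) with hL
  set P : ℂ → ℝ := fun z₂ => A * (1 - ‖z₂‖ ^ 2) with hPdef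
  set d : ℂ → ℝ := fun z₂ => ‖z₁ - z₂‖ ^ 2 with hddef
  -- positivity on the domain
  have hdom : ∀ z₂ ∈ Metric.ball (0 : ℂ) 1 \ {z₁}, 0 < P z₂ ∧ 0 < d z₂ := by
    rintro z₂ ⟨hz₂, hne⟩
    have hz : ‖z₂‖ < 1 := by simpa using hz₂
    have hP : 0 < P z₂ := by
      have : ‖z₂‖ ^ 2 < 1 := by nlinarith [norm_nonneg z₂]
      have : 0 < 1 - ‖z₂‖ ^ 2 := by linarith
      exact mul_pos hA this
    have hd : 0 < d z₂ := by
      have hne' : z₁ - z₂ ≠ 0 := sub_ne_zero.2 fun h => hne h.symm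
      have := norm_pos_iff.mpr hne'
      positivity
    exact ⟨hP, hd⟩
  -- P tends to A*A
  have hPt : Tendsto P L (nhds (A * A)) := by
    have hc : ContinuousAt P z₁ := by
      apply continuousAt_const.mul
      exact (continuousAt_const.sub ((continuous_norm.continuousAt).pow 2))
    have : P z₁ = A * A := by simp [hPdef, hAdef]
    exact this ▸ hc.continuousWithinAt
  -- d tends to 0
  have hdt : Tendsto d L (nhds 0) := by
    have hc : ContinuousAt d z₁ := by
      exact ((continuous_norm.comp (continuous_const.sub continuous_id)).pow 2).continuousAt
    have : d z₁ = 0 := by simp [hddef]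
    exact this ▸ hc.continuousWithinAt
  -- x = d/P tends to 0 within {0}ᶜ
  have hAA : A * A ≠ 0 := (mul_pos hA hA).ne'
  have hxt : Tendsto (fun z₂ => d z₂ / P z₂) L (nhdsWithin 0 {(0:ℝ)}ᶜ) := by
    rw [tendsto_nhdsWithin_iff]
    constructor
    · have := hdt.div hPt hAA
      exact (by simpa using this : Tendsto (d / P) L (nhds 0))
    · filter_upwards [self_mem_nhdsWithin] with z₂ hz
      obtain ⟨hP, hd⟩ := hdom z₂ hz
      exact (div_pos hd hP).ne'
  have hPinv : Tendsto (fun z₂ => ((P z₂)⁻¹) ^ 2) L (nhds (((A * A)⁻¹) ^ 2)) :=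
    (hPt.inv₀ hAA).pow 2
  have hmain := (logTaylorHalf.comp hxt).mul hPinv
  have heq : ∀ᶠ z₂ in L,
      ((fun t : ℝ => (t - Real.log (1+t)) / t^2) ∘ fun z₂ => d z₂ / P z₂) z₂ * ((P z₂)⁻¹) ^ 2 =
      ((1 - ‖z₁‖ ^ 2)⁻¹ * (1 - ‖z₂‖ ^ 2)⁻¹ -
            (‖z₁ - z₂‖ ^ 2)⁻¹ *
              Real.log (‖1 - z₁ * conj' z₂‖ ^ 2 /
                ((1 - ‖z₁‖ ^ 2) * (1 - ‖z₂‖ ^ 2)))) /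
          ‖z₁ - z₂‖ ^ 2 := by
    filter_upwards [self_mem_nhdsWithin] with z₂ hz
    obtain ⟨hP, hd⟩ := hdom z₂ hz
    have hz : ‖z₂‖ < 1 := by simpa using hz.1
    have hp : 0 < 1 - ‖z₂‖ ^ 2 := by nlinarith [norm_nonneg z₂]
    have harg : ‖1 - z₁ * conj' z₂‖ ^ 2 /
        ((1 - ‖z₁‖ ^ 2) * (1 - ‖z₂‖ ^ 2)) = 1 + d z₂ / P z₂ := by
      rw [kernel_identity]
      field_simp [hPdef, hddef]
      rw [div_eq_iff (show (1 - ‖z₁‖ ^ 2) ≠ 0 from hA.ne')]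
      simp only [hPdef, hddef, hAdef]
      ring
    rw [harg]
    simp only [Function.comp]
    have hPne : P z₂ ≠ 0 := hP.ne'
    have hdne : d z₂ ≠ 0 := hd.ne'
    have hinv : (1 - ‖z₁‖ ^ 2)⁻¹ * (1 - ‖z₂‖ ^ 2)⁻¹ = (P z₂)⁻¹ := by
      rw [hPdef, hAdef, mul_inv]
    rw [hinv]
    rw [show (‖z₁ - z₂‖ ^ 2 : ℝ) = d z₂ from rfl]
    field_simp
  have hfinal := hmain.congr' heq
  have hval : (1 / 2 : ℝ) * ((A * A)⁻¹) ^ 2 = (1/2) * (A⁻¹) ^ 4 := by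
    rw [mul_inv]; ring
  rw [hval] at hfinal
  exact hfinal
end
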